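/- Let G be a metric space such that for all x, y ∈ G and λ ∈ (0,1) there exists a point m with d(x,m) = λ d(x,y) and d(m,y) = (1−λ) d(x,y) (a geodesic/convex metric space). Define (S(t)f)(x) := sup_{d(x,y)≤t} f(y) for bounded uniformly continuous f. Then S(s+t)f = S(t)(S(s)f) for all s, t ≥ 0. -/

import Mathlib

/-- The uncertain shift semigroup on a metric space `G`:
`(S t f) x = sup_{dist x y ≤ t} f y`. -/
noncomputable def MS {G : Type*} [MetricSpace G] (t : ℝ) (f : G → ℝ) (x : G) : ℝ :=
  sSup {z : ℝ | ∃ y : G, dist x y ≤ t ∧ z = f y}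

/-- On a metric space with the intermediate-point (geodesic) property, the uncertain shift
semigroup satisfies the semigroup law `S(s+t)f = S(t)(S(s)f)` on bounded uniformly
continuous functions. -/
theorem stmt18 {G : Type*} [MetricSpace G]
    (hgeo : ∀ x y : G, ∀ l : ℝ, 0 < l → l < 1 → ∃ m : G,
      dist x m = l * dist x y ∧ dist m y = (1 - l) * dist x y)
    (f : G → ℝ) (C : ℝ) (hb : ∀ x, |f x| ≤ C) (hu : UniformContinuous f)
    (s t : ℝ) (hs : 0 ≤ s) (ht : 0 ≤ t) (x : G) :
    MS (s + t) f x = MS t (MS s f) x := by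
  have hC : ∀ y, f y ≤ C := fun y => (abs_le.1 (hb y)).2
  have hbdd : ∀ (r : ℝ) (p : G), BddAbove {z : ℝ | ∃ y, dist p y ≤ r ∧ z = f y} :=
    fun r p => ⟨C, fun z ⟨y, _, hz⟩ => hz ▸ hC y⟩
  have hne : ∀ (r : ℝ) (p : G), 0 ≤ r → ({z : ℝ | ∃ y, dist p y ≤ r ∧ z = f y}).Nonempty :=
    fun r p hr => ⟨f p, p, by simpa using hr, rfl⟩
  have hMSle : ∀ p, MS s f p ≤ C := fun p =>
    csSup_le (hne s p hs) (fun z ⟨y, _, hz⟩ => hz ▸ hC y)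
  have hbdd2 : BddAbove {z : ℝ | ∃ y, dist x y ≤ t ∧ z = MS s f y} :=
    ⟨C, fun z ⟨y, _, hz⟩ => hz ▸ hMSle y⟩
  apply le_antisymm
  · apply csSup_le (hne (s + t) x (by linarith))
    rintro z ⟨y, hy, rfl⟩
    obtain ⟨m, hxm, hmy⟩ : ∃ m : G, dist x m ≤ t ∧ dist m y ≤ s := by
      rcases eq_or_lt_of_le hs with hs0 | hs0
      · refine ⟨y, ?_, by simp [← hs0]⟩
        simpa [← hs0] using hy
      rcases eq_or_lt_of_le ht with ht0 | ht0
      · refine ⟨x, by simp [← ht0], ?_⟩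
        simpa [← ht0] using hy
      have hst : 0 < s + t := by linarith
      obtain ⟨m, h1, h2⟩ := hgeo x y (t / (s + t)) (by positivity)
        (by rw [div_lt_one hst]; linarith)
      have hd0 : 0 ≤ dist x y := dist_nonneg
      refine ⟨m, ?_, ?_⟩
      · rw [h1]
        calc t / (s + t) * dist x y ≤ t / (s + t) * (s + t) := by
              apply mul_le_mul_of_nonneg_left hy (by positivity)
          _ = t := by field_simp
      · rw [h2]
        have h1l : 0 ≤ 1 - t / (s + t) := by
          rw [sub_nonneg, div_le_one hst]; linarith
        calc (1 - t / (s + t)) * dist x y ≤ (1 - t / (s + t)) * (s + t) := by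
              apply mul_le_mul_of_nonneg_left hy h1l
          _ = s := by field_simp; ring
    calc f y ≤ MS s f m := le_csSup (hbdd s m) ⟨y, hmy, rfl⟩
      _ ≤ MS t (MS s f) x := le_csSup hbdd2 ⟨m, hxm, rfl⟩
  · have hne2 : ({z : ℝ | ∃ y, dist x y ≤ t ∧ z = MS s f y}).Nonempty :=
      ⟨MS s f x, x, by simpa using ht, rfl⟩
    apply csSup_le hne2
    rintro z ⟨m, hm, rfl⟩
    apply csSup_le (hne s m hs)
    rintro z ⟨y, hy, rfl⟩
    refine le_csSup (hbdd (s + t) x) ⟨y, ?_, rfl⟩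
    have := dist_triangle x m y
    linarith
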